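/- Let G and H be finite simple graphs, let a ≠ b and c ≠ d be vertices of G, and let α ≠ β and γ ≠ κ be vertices of H. In the Cartesian product G □ H, there exists a complex scalar μ with |μ| = 1 such that U_{G□H}(t)((e_a − e_b) ⊗ (e_α − e_β)) = μ ((e_c − e_d) ⊗ (e_γ − e_κ)) if and only if both of the following hold: (i) there is perfect pair state transfer from (a,b) to (c,d) in G at time t, and (ii) there is perfect pair state transfer from (α,β) to (γ,κ) in H at time t. -/

import Mathlib

open Matrix NormedSpace
open scoped Kronecker

variable {V : Type*}

/-- The transition matrix `U(t) = exp(itL)` of the continuous quantum walk on `G`,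
where `L` is the Laplacian of `G`. -/
noncomputable def transitionMatrix [Fintype V] [DecidableEq V] (G : SimpleGraph V)
    [DecidableRel G.Adj] (t : ℝ) : Matrix V V ℂ :=
  NormedSpace.exp ((Complex.I * (t : ℂ)) • G.lapMatrix ℂ)

/-- The pair state `e_a - e_b`. -/
def pairState [DecidableEq V] (a b : V) : V → ℂ := Pi.single a 1 - Pi.single b 1

/-- Perfect pair state transfer from `(a,b)` to `(c,d)` at time `t`. -/
def PerfectPairStateTransfer [Fintype V] [DecidableEq V] (G : SimpleGraph V)
    [DecidableRel G.Adj] (t : ℝ) (a b c d : V) : Prop :=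
  ∃ γ : ℂ, ‖γ‖ = 1 ∧
    (transitionMatrix G t).mulVec (pairState a b) = γ • pairState c d

instance {W X : Type*} (G : SimpleGraph W) (H : SimpleGraph X)
    [DecidableRel G.Adj] [DecidableRel H.Adj] [DecidableEq W] [DecidableEq X] :
    DecidableRel (G.boxProd H).Adj := fun _ _ =>
  decidable_of_iff _ (SimpleGraph.boxProd_adj).symm

/-- The tensor product of two vectors. -/
def tensorVec {W X : Type*} (x : W → ℂ) (y : X → ℂ) : W × X → ℂ := fun p => x p.1 * y p.2


section Aux

variable {W X : Type*} [Fintype W] [DecidableEq W] [Fintype X] [DecidableEq X]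

/-- `A ↦ A ⊗ₖ 1` as an algebra hom. -/
noncomputable def kronRight : Matrix W W ℂ →ₐ[ℂ] Matrix (W × X) (W × X) ℂ where
  toFun A := A ⊗ₖ (1 : Matrix X X ℂ)
  map_one' := Matrix.one_kronecker_one
  map_mul' A B := by rw [← Matrix.mul_kronecker_mul, one_mul]
  map_zero' := Matrix.zero_kronecker _
  map_add' A B := Matrix.add_kronecker A B _
  commutes' r := by
    ext ⟨i, j⟩ ⟨k, l⟩
    by_cases h1 : i = k <;> by_cases h2 : j = l <;>
      simp [Matrix.kroneckerMap_apply, Matrix.algebraMap_eq_diagonal, Matrix.diagonal_apply,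
        Matrix.one_apply, Prod.ext_iff, h1, h2]

/-- `B ↦ 1 ⊗ₖ B` as an algebra hom. -/
noncomputable def kronLeft : Matrix X X ℂ →ₐ[ℂ] Matrix (W × X) (W × X) ℂ where
  toFun B := (1 : Matrix W W ℂ) ⊗ₖ B
  map_one' := Matrix.one_kronecker_one
  map_mul' A B := by rw [← Matrix.mul_kronecker_mul, one_mul]
  map_zero' := Matrix.kronecker_zero _
  map_add' A B := Matrix.kronecker_add _ A B
  commutes' r := by
    ext ⟨i, j⟩ ⟨k, l⟩
    by_cases h1 : i = k <;> by_cases h2 : j = l <;>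
      simp [Matrix.kroneckerMap_apply, Matrix.algebraMap_eq_diagonal, Matrix.diagonal_apply,
        Matrix.one_apply, Prod.ext_iff, h1, h2]

theorem exp_kronecker_one (A : Matrix W W ℂ) :
    exp (A ⊗ₖ (1 : Matrix X X ℂ)) = exp A ⊗ₖ (1 : Matrix X X ℂ) := by
  letI : SeminormedRing (Matrix W W ℂ) := Matrix.linftyOpSemiNormedRing
  letI : NormedRing (Matrix W W ℂ) := Matrix.linftyOpNormedRing
  letI : NormedAlgebra ℂ (Matrix W W ℂ) := Matrix.linftyOpNormedAlgebra
  letI : NormedAlgebra ℚ (Matrix W W ℂ) := .restrictScalars ℚ ℂ (Matrix W W ℂ)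
  letI : SeminormedRing (Matrix (W × X) (W × X) ℂ) := Matrix.linftyOpSemiNormedRing
  letI : NormedRing (Matrix (W × X) (W × X) ℂ) := Matrix.linftyOpNormedRing
  letI : NormedAlgebra ℂ (Matrix (W × X) (W × X) ℂ) := Matrix.linftyOpNormedAlgebra
  have hc : Continuous (kronRight (W := W) (X := X)) :=
    (kronRight (W := W) (X := X)).toLinearMap.continuous_of_finiteDimensional
  exact (map_exp (kronRight (W := W) (X := X)) hc A).symm

theorem one_kronecker_exp (B : Matrix X X ℂ) :
    exp ((1 : Matrix W W ℂ) ⊗ₖ B) = (1 : Matrix W W ℂ) ⊗ₖ exp B := by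
  letI : SeminormedRing (Matrix X X ℂ) := Matrix.linftyOpSemiNormedRing
  letI : NormedRing (Matrix X X ℂ) := Matrix.linftyOpNormedRing
  letI : NormedAlgebra ℂ (Matrix X X ℂ) := Matrix.linftyOpNormedAlgebra
  letI : NormedAlgebra ℚ (Matrix X X ℂ) := .restrictScalars ℚ ℂ (Matrix X X ℂ)
  letI : SeminormedRing (Matrix (W × X) (W × X) ℂ) := Matrix.linftyOpSemiNormedRing
  letI : NormedRing (Matrix (W × X) (W × X) ℂ) := Matrix.linftyOpNormedRing
  letI : NormedAlgebra ℂ (Matrix (W × X) (W × X) ℂ) := Matrix.linftyOpNormedAlgebra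
  have hc : Continuous (kronLeft (W := W) (X := X)) :=
    (kronLeft (W := W) (X := X)).toLinearMap.continuous_of_finiteDimensional
  exact (map_exp (kronLeft (W := W) (X := X)) hc B).symm

end Aux

section Aux2

variable {W X : Type*} [Fintype W] [DecidableEq W] [Fintype X] [DecidableEq X]
variable (G : SimpleGraph W) (H : SimpleGraph X) [DecidableRel G.Adj] [DecidableRel H.Adj]

theorem lapMatrix_boxProd :
    (G.boxProd H).lapMatrix ℂ =
      G.lapMatrix ℂ ⊗ₖ (1 : Matrix X X ℂ) + (1 : Matrix W W ℂ) ⊗ₖ H.lapMatrix ℂ := by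
  ext ⟨i, j⟩ ⟨k, l⟩
  simp only [SimpleGraph.lapMatrix, SimpleGraph.degMatrix, Matrix.sub_apply, Matrix.add_apply,
    Matrix.kroneckerMap_apply, Matrix.diagonal_apply, Matrix.one_apply,
    SimpleGraph.adjMatrix_apply, SimpleGraph.boxProd_adj, Prod.mk.injEq]
  rw [SimpleGraph.degree_boxProd]
  by_cases h1 : i = k <;> by_cases h2 : j = l <;>
    subst_vars <;>
    simp_all [Prod.ext_iff, push_cast] <;> ring_nf <;>
    simp [SimpleGraph.irrefl]

theorem transitionMatrix_boxProd (t : ℝ) :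
    transitionMatrix (G.boxProd H) t =
      transitionMatrix G t ⊗ₖ transitionMatrix H t := by
  unfold transitionMatrix
  rw [lapMatrix_boxProd, smul_add]
  rw [← Matrix.smul_kronecker, ← Matrix.kronecker_smul]
  rw [Matrix.exp_add_of_commute]
  · rw [exp_kronecker_one, one_kronecker_exp, ← Matrix.mul_kronecker_mul, one_mul, mul_one]
  · show _ * _ = _ * _
    rw [← Matrix.mul_kronecker_mul, ← Matrix.mul_kronecker_mul, one_mul, mul_one, one_mul, mul_one]

end Aux2


section Aux3

variable {W X : Type*} [Fintype W] [DecidableEq W] [Fintype X] [DecidableEq X]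

theorem kronecker_mulVec_tensorVec (A : Matrix W W ℂ) (B : Matrix X X ℂ) (x : W → ℂ) (y : X → ℂ) :
    (A ⊗ₖ B) *ᵥ tensorVec x y = tensorVec (A *ᵥ x) (B *ᵥ y) := by
  ext ⟨i, j⟩
  simp only [Matrix.mulVec, dotProduct, tensorVec, Matrix.kroneckerMap_apply]
  rw [Fintype.sum_prod_type, Finset.sum_mul_sum]
  exact Finset.sum_congr rfl fun k _ => Finset.sum_congr rfl fun l _ => by ring

theorem tensorVec_smul_smul (c₁ c₂ : ℂ) (x : W → ℂ) (y : X → ℂ) :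
    tensorVec (c₁ • x) (c₂ • y) = (c₁ * c₂) • tensorVec x y := by
  ext ⟨i, j⟩
  simp [tensorVec]
  ring

theorem pairState_self {a b : W} (hab : a ≠ b) : pairState a b a = 1 := by
  simp [pairState, Pi.single_apply, hab]

theorem pairState_apply (a b v : W) :
    pairState a b v = (if v = a then 1 else 0) - (if v = b then 1 else 0) := by
  simp [pairState, Pi.single_apply, eq_comm]

theorem dot_pairState {a b : W} (hab : a ≠ b) :
    dotProduct (star (pairState a b)) (pairState a b) = 2 := by
  have : ∀ v, star (pairState a b v) * pairState a b v
      = (if v = a then 1 else 0) + (if v = b then 1 else 0) := by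
    intro v
    rw [pairState_apply]
    by_cases h1 : v = a <;> by_cases h2 : v = b <;> simp_all
  simp only [dotProduct, Pi.star_apply, this]
  rw [Finset.sum_add_distrib, Finset.sum_ite_eq' Finset.univ a (fun _ => (1 : ℂ)),
    Finset.sum_ite_eq' Finset.univ b (fun _ => (1 : ℂ))]
  simp
  norm_num

theorem dot_smul_pairState (c : ℂ) {a b : W} (hab : a ≠ b) :
    dotProduct (star (c • pairState a b)) (c • pairState a b)
      = (‖c‖ : ℂ) ^ 2 * 2 := by
  have : star (c • pairState a b) = star c • star (pairState a b) := by
    ext v; simp [mul_comm]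
  rw [this, smul_dotProduct, dotProduct_smul, dot_pairState hab, smul_eq_mul,
    smul_eq_mul, ← mul_assoc, Complex.star_def, mul_comm ((starRingEnd ℂ) c) c, Complex.mul_conj]
  norm_cast
  rw [Complex.sq_norm]

variable (G : SimpleGraph W) [DecidableRel G.Adj]

theorem transitionMatrix_unitary (t : ℝ) :
    (transitionMatrix G t)ᴴ * transitionMatrix G t = 1 := by
  have hherm : (G.lapMatrix ℂ)ᴴ = G.lapMatrix ℂ := by
    ext i j
    simp only [Matrix.conjTranspose_apply, SimpleGraph.lapMatrix, Matrix.sub_apply,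
      SimpleGraph.degMatrix, Matrix.diagonal_apply, SimpleGraph.adjMatrix_apply, star_sub,
      apply_ite (star : ℂ → ℂ), star_one, star_zero, star_natCast]
    by_cases h : i = j
    · subst h; simp
    · simp [h, Ne.symm h, G.adj_comm i j]
  have h1 : (transitionMatrix G t)ᴴ
      = NormedSpace.exp ((-(Complex.I * (t : ℂ))) • G.lapMatrix ℂ) := by
    rw [transitionMatrix, ← Matrix.exp_conjTranspose]
    congr 1
    rw [Matrix.conjTranspose_smul, hherm]
    congr 1
    simp [Complex.star_def]
  rw [h1, transitionMatrix, ← Matrix.exp_add_of_commute]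
  · rw [neg_smul, neg_add_cancel, NormedSpace.exp_zero]
  · exact (Commute.refl _).smul_left _ |>.smul_right _
  
theorem norm_mulVec_transition (t : ℝ) (x : W → ℂ) :
    dotProduct (star ((transitionMatrix G t) *ᵥ x)) ((transitionMatrix G t) *ᵥ x)
      = dotProduct (star x) x := by
  rw [Matrix.star_mulVec, Matrix.dotProduct_mulVec, Matrix.vecMul_vecMul,
    transitionMatrix_unitary, Matrix.vecMul_one]

end Aux3

/-- Perfect pair state transfer in a Cartesian product between tensor-product pair
states holds exactly when there is perfect pair state transfer in each factor at the
same time. -/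
theorem pst_boxProd {W X : Type*} [Fintype W] [DecidableEq W] [Fintype X] [DecidableEq X]
    (G : SimpleGraph W) (H : SimpleGraph X) [DecidableRel G.Adj] [DecidableRel H.Adj]
    (a b c d : W) (hab : a ≠ b) (hcd : c ≠ d)
    (α β γ κ : X) (hαβ : α ≠ β) (hγκ : γ ≠ κ) (t : ℝ) :
    (∃ μ : ℂ, ‖μ‖ = 1 ∧
        (transitionMatrix (G.boxProd H) t).mulVec
            (tensorVec (pairState a b) (pairState α β)) =
          μ • tensorVec (pairState c d) (pairState γ κ)) ↔
      PerfectPairStateTransfer G t a b c d ∧ PerfectPairStateTransfer H t α β γ κ := by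
  rw [show (transitionMatrix (G.boxProd H) t).mulVec = fun v => transitionMatrix (G.boxProd H) t *ᵥ v from rfl]
  rw [transitionMatrix_boxProd, ]
  simp only [kronecker_mulVec_tensorVec]
  set p := transitionMatrix G t *ᵥ pairState a b with hp
  set q := transitionMatrix H t *ᵥ pairState α β with hq
  constructor
  · rintro ⟨μ, hμ, h⟩
    have hμ0 : μ ≠ 0 := by
      intro h0; rw [h0] at hμ; simp at hμ
    have hpq : ∀ i j, p i * q j = μ * (pairState c d i * pairState γ κ j) := by
      intro i j
      have := congrFun h (i, j)
      simpa [tensorVec, smul_eq_mul, mul_assoc] using this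
    have hcγ : p c * q γ = μ := by
      have := hpq c γ
      rwa [pairState_self hcd, pairState_self hγκ, mul_one, mul_one] at this
    have hqγ : q γ ≠ 0 := fun h0 => hμ0 (by rw [← hcγ, h0, mul_zero])
    have hpc : p c ≠ 0 := fun h0 => hμ0 (by rw [← hcγ, h0, zero_mul])
    have hP : p = p c • pairState c d := by
      ext i
      have h1 := hpq i γ
      rw [pairState_self hγκ, mul_one] at h1
      have h2 : p i * q γ = (p c * pairState c d i) * q γ := by
        rw [h1, ← hcγ]; ring
      simpa [Pi.smul_apply, smul_eq_mul] using mul_right_cancel₀ hqγ h2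
    have hQ : q = q γ • pairState γ κ := by
      ext j
      have h1 := hpq c j
      rw [pairState_self hcd, one_mul] at h1
      have h2 : p c * q j = (q γ * pairState γ κ j) * p c := by
        rw [h1, ← hcγ]; ring
      rw [mul_comm] at h2
      simpa [Pi.smul_apply, smul_eq_mul] using mul_right_cancel₀ hpc h2
    have hnp : dotProduct (star p) p = 2 := by
      rw [hp, norm_mulVec_transition, dot_pairState hab]
    have hnq : dotProduct (star q) q = 2 := by
      rw [hq, norm_mulVec_transition, dot_pairState hαβ]
    have habs1 : ‖p c‖ = 1 := by
      rw [hP, dot_smul_pairState _ hcd] at hnp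
      have h3 : (‖p c‖) ^ 2 * 2 = 2 := by exact_mod_cast hnp
      nlinarith [norm_nonneg (p c)]
    have habs2 : ‖q γ‖ = 1 := by
      rw [hQ, dot_smul_pairState _ hγκ] at hnq
      have h3 : (‖q γ‖) ^ 2 * 2 = 2 := by exact_mod_cast hnq
      nlinarith [norm_nonneg (q γ)]
    exact ⟨⟨p c, habs1, hP⟩, ⟨q γ, habs2, hQ⟩⟩
  · rintro ⟨⟨g1, hg1, hU1⟩, g2, hg2, hU2⟩
    refine ⟨g1 * g2, by rw [norm_mul, hg1, hg2, mul_one], ?_⟩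
    rw [hp, hq] at *
    rw [hU1, hU2, tensorVec_smul_smul]
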